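/- arXiv:2408.06914 — 2 statements merged into one kernel-verified Lean document; each statement's English description precedes it below -/
import Mathlib

section
/- Let (Λ, π, γ) be a quantified scenario such that some a ∈ A is minimal in F ∪ A with respect to ≺_Q, i.e. Q_a = ∅, and let Λ^{a/0}, Λ^{a/1} be the reduced quantified scenarios obtained by substituting 0 (resp. 1) for the a-variable of φ and removing a. Then the probability–maximal-cost Pareto front satisfies the recursion PMC(Λ̂) = PF(Ψ_A(PMC(Λ̂^{a/0}), PMC(Λ̂^{a/1}), γ_a)), where Ψ_A(I₁,I₂,c) = I₁ ∪ {(p₂, c₂ + c) : (p₂,c₂) ∈ I₂}. -/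
open scoped ENNReal

/-- A scenario `(F, A, φ, Q)`: `φ : 𝔹^F × 𝔹^A → 𝔹` is a Boolean function, and
`Q` assigns to each attack `a ∈ A` the subset `Q_a ⊆ F` of failures observable when
deciding about `a`; the family `{Q_a}` is totally ordered by inclusion. -/
structure Scenario (F A : Type) where
  φ : (F → Bool) → (A → Bool) → Bool
  Q : A → Finset F
  chain : ∀ a a' : A, Q a ⊆ Q a' ∨ Q a' ⊆ Q a

variable {F A : Type}

/-- A strategy: for each `a ∈ A`, a map `σ_a : 𝔹^{Q_a} → 𝔹`. -/
def Strategy (Λ : Scenario F A) : Type :=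
  (a : A) → ({f : F // f ∈ Λ.Q a} → Bool) → Bool

/-- The induced map `σ̂ : 𝔹^F → 𝔹^A`, `σ̂(x)_a = σ_a(x|_{Q_a})`. -/
def hatS (Λ : Scenario F A) (σ : Strategy Λ) (x : F → Bool) : A → Bool :=
  fun a => σ a fun f => x f.1

/-- The reduced scenario `Λ^{a/b}`: substitute `b` for the `a`-variable of `φ`
and remove `a` from `A`. -/
def Scenario.reduceA [DecidableEq A] (Λ : Scenario F A) (a : A) (b : Bool) :
    Scenario F {a' : A // a' ≠ a} where
  φ := fun x y => Λ.φ x (fun a' => if h : a' = a then b else y ⟨a', h⟩)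
  Q := fun a' => Λ.Q a'.1
  chain := fun a' a'' => Λ.chain a'.1 a''.1

/-- The lifted strategy `ι(σ)`: set `σ_a` identically equal to `b` and leave `σ_{a'}`
unchanged for `a' ≠ a`. -/
def iota [DecidableEq A] (Λ : Scenario F A) (a : A) (b : Bool)
    (σ : Strategy (Λ.reduceA a b)) : Strategy Λ :=
  fun a' x => if h : a' = a then b else σ ⟨a', h⟩ x

/-- Bernoulli weight of an outcome `x ∈ 𝔹^F`:
`(∏_{f : x_f = 1} π_f) · (∏_{f : x_f = 0} (1 - π_f))`. -/
noncomputable def wght [Fintype F] (π : F → ℝ≥0∞) (x : F → Bool) : ℝ≥0∞ :=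
  ∏ f, if x f then π f else 1 - π f

/-- Success probability `π̂(σ)`: the probability that `φ(x, σ̂(x)) = 1` when the
coordinates `x_f` are independent Bernoulli(`π_f`). -/
noncomputable def probS [Fintype F] [DecidableEq F] (Λ : Scenario F A)
    (π : F → ℝ≥0∞) (σ : Strategy Λ) : ℝ≥0∞ :=
  ∑ x : F → Bool, wght π x * (if Λ.φ x (hatS Λ σ x) then 1 else 0)

/-- Cost incurred by strategy `σ` upon observing `x`: `Σ_{a : σ̂(x)_a = 1} γ_a`. -/
noncomputable def costOf [Fintype A] (Λ : Scenario F A) (γ : A → ℝ≥0∞) (σ : Strategy Λ)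
    (x : F → Bool) : ℝ≥0∞ :=
  ∑ a, if hatS Λ σ x a then γ a else 0

/-- Maximal cost `γ̂_m(σ) = max_{x ∈ 𝔹^F} Σ_{a : σ̂(x)_a = 1} γ_a`. -/
noncomputable def maxCost [Fintype F] [DecidableEq F] [Fintype A] (Λ : Scenario F A)
    (γ : A → ℝ≥0∞) (σ : Strategy Λ) : ℝ≥0∞ :=
  ⨆ x : F → Bool, costOf Λ γ σ x

/-- Expected cost `γ̂_e(σ)`. -/
noncomputable def expCost [Fintype F] [DecidableEq F] [Fintype A] (Λ : Scenario F A)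
    (π : F → ℝ≥0∞) (γ : A → ℝ≥0∞) (σ : Strategy Λ) : ℝ≥0∞ :=
  ∑ x : F → Bool, wght π x * costOf Λ γ σ x

/-- `D = [0,1] × [0,∞]`: probability–cost pairs, costs in the extended nonnegative
reals.  We encode it as the pairs `(p, c) : ℝ≥0∞ × ℝ≥0∞` with `p ≤ 1`. -/
def Dom : Set (ℝ≥0∞ × ℝ≥0∞) := {d | d.1 ≤ 1}

/-- `(p,c) ⊑ (p',c')` iff `p ≥ p'` and `c ≤ c'`. -/
def sqle (d d' : ℝ≥0∞ × ℝ≥0∞) : Prop := d'.1 ≤ d.1 ∧ d.2 ≤ d'.2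

/-- `d ⊏ d'` iff `d ⊑ d'` and `d ≠ d'`. -/
def slt (d d' : ℝ≥0∞ × ℝ≥0∞) : Prop := sqle d d' ∧ d ≠ d'

/-- The Pareto front `PF(I) = {d ∈ I : ∀ d' ∈ I, ¬(d' ⊏ d)}`. -/
def PF (I : Set (ℝ≥0∞ × ℝ≥0∞)) : Set (ℝ≥0∞ × ℝ≥0∞) :=
  {d ∈ I | ∀ d' ∈ I, ¬ slt d' d}

/-- `Ψ_A(I₁,I₂,c) = I₁ ∪ {(p₂, c₂ + c) : (p₂,c₂) ∈ I₂}`. -/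
def PsiA (I₁ I₂ : Set (ℝ≥0∞ × ℝ≥0∞)) (c : ℝ≥0∞) : Set (ℝ≥0∞ × ℝ≥0∞) :=
  I₁ ∪ {d | ∃ d₂ ∈ I₂, d = (d₂.1, d₂.2 + c)}


section AuxPMC

lemma sqle_refl (d : ℝ≥0∞ × ℝ≥0∞) : sqle d d := ⟨le_refl _, le_refl _⟩

lemma sqle_trans {d e f : ℝ≥0∞ × ℝ≥0∞} (h1 : sqle d e) (h2 : sqle e f) : sqle d f :=
  ⟨h2.1.trans h1.1, h1.2.trans h2.2⟩

lemma sqle_antisymm {d e : ℝ≥0∞ × ℝ≥0∞} (h1 : sqle d e) (h2 : sqle e d) : d = e :=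
  Prod.ext (le_antisymm h2.1 h1.1) (le_antisymm h1.2 h2.2)

lemma PF_subset (I : Set (ℝ≥0∞ × ℝ≥0∞)) : PF I ⊆ I := fun _ hd => hd.1

/-- Embedding into a genuine partial order realizing `sqle`. -/
def embD : (ℝ≥0∞ × ℝ≥0∞) → (ℝ≥0∞ᵒᵈ × ℝ≥0∞) := fun d => (OrderDual.toDual d.1, d.2)

lemma embD_inj : Function.Injective embD := by
  intro d e h
  simpa [embD, Prod.ext_iff] using h

lemma sqle_iff_embD {d e : ℝ≥0∞ × ℝ≥0∞} : sqle d e ↔ embD d ≤ embD e := by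
  simp [sqle, embD, Prod.le_def, and_comm]

lemma exists_pf_le {I : Set (ℝ≥0∞ × ℝ≥0∞)} (hI : I.Finite) {d} (hd : d ∈ I) :
    ∃ d' ∈ PF I, sqle d' d := by
  obtain ⟨m, ⟨hmI, hmd⟩, hmin⟩ :=
    Set.Finite.exists_minimalFor embD {e ∈ I | sqle e d}
      (hI.subset (fun e he => he.1)) ⟨d, hd, sqle_refl d⟩
  refine ⟨m, ⟨hmI, ?_⟩, hmd⟩
  rintro e heI ⟨hle, hne⟩
  have heS : e ∈ {e ∈ I | sqle e d} := ⟨heI, sqle_trans hle hmd⟩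
  have := le_antisymm (hmin heS (sqle_iff_embD.mp hle)) (sqle_iff_embD.mp hle)
  exact hne (embD_inj this.symm)

lemma PF_congr {I J : Set (ℝ≥0∞ × ℝ≥0∞)} (hJI : J ⊆ I)
    (hdom : ∀ d ∈ I, ∃ d' ∈ J, sqle d' d) : PF I = PF J := by
  ext d
  constructor
  · rintro ⟨hdI, hmin⟩
    obtain ⟨d', hd'J, hd'd⟩ := hdom d hdI
    have hdd : d' = d := by
      by_contra hne
      exact hmin d' (hJI hd'J) ⟨hd'd, hne⟩
    exact ⟨hdd ▸ hd'J, fun e heJ => hmin e (hJI heJ)⟩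
  · rintro ⟨hdJ, hmin⟩
    refine ⟨hJI hdJ, ?_⟩
    rintro e heI ⟨hle, hne⟩
    obtain ⟨e', he'J, he'e⟩ := hdom e heI
    by_cases h : e' = d
    · subst h
      exact hne (sqle_antisymm hle he'e)
    · exact hmin e' he'J ⟨sqle_trans he'e hle, h⟩

variable {F A : Type}

lemma probS_iota [Fintype F] [DecidableEq F] [DecidableEq A] (Λ : Scenario F A)
    (π : F → ℝ≥0∞) (a : A) (b : Bool) (σ' : Strategy (Λ.reduceA a b)) :
    probS Λ π (iota Λ a b σ') = probS (Λ.reduceA a b) π σ' := rfl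

lemma costOf_iota [Fintype A] [DecidableEq A] (Λ : Scenario F A)
    (γ : A → ℝ≥0∞) (a : A) (b : Bool) (σ' : Strategy (Λ.reduceA a b)) (x : F → Bool) :
    costOf Λ γ (iota Λ a b σ') x =
      (if b then γ a else 0) + costOf (Λ.reduceA a b) (fun a' => γ a'.1) σ' x := by
  unfold costOf
  rw [Fintype.sum_eq_add_sum_compl a]
  congr 1
  · simp [hatS, iota]
  · rw [Finset.sum_subtype (p := fun a' => a' ≠ a) _
      (by simp : ∀ y, y ∈ ({a}ᶜ : Finset A) ↔ y ≠ a)]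
    refine Finset.sum_congr rfl fun a' _ => ?_
    rcases a' with ⟨a', ha⟩
    simp only [hatS, iota, dif_neg ha]
    rfl

lemma maxCost_iota [Fintype F] [DecidableEq F] [Fintype A] [DecidableEq A]
    (Λ : Scenario F A) (γ : A → ℝ≥0∞) (a : A) (b : Bool)
    (σ' : Strategy (Λ.reduceA a b)) :
    maxCost Λ γ (iota Λ a b σ') =
      (if b then γ a else 0) + maxCost (Λ.reduceA a b) (fun a' => γ a'.1) σ' := by
  unfold maxCost
  rw [ENNReal.add_iSup]
  exact iSup_congr fun x => costOf_iota Λ γ a b σ' x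

lemma iota_surj [DecidableEq A] (Λ : Scenario F A) (a : A) (hQa : Λ.Q a = ∅)
    (σ : Strategy Λ) :
    ∃ (b : Bool) (σ' : Strategy (Λ.reduceA a b)), σ = iota Λ a b σ' := by
  refine ⟨σ a (fun f => (Finset.notMem_empty f.1 (hQa ▸ f.2)).elim),
    fun a' x => σ a'.1 x, ?_⟩
  funext a' x
  unfold iota
  by_cases h : a' = a
  · subst h
    rw [dif_pos rfl]
    exact congrArg (σ a') (funext fun f => (Finset.notMem_empty f.1 (hQa ▸ f.2)).elim)
  · rw [dif_neg h]

end AuxPMC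

/-- The recursion `PMC(Λ̂) = PF(Ψ_A(PMC(Λ̂^{a/0}), PMC(Λ̂^{a/1}), γ_a))`, where
`PMC(Λ̂) = PF(τ_m(Σ_Λ))`. -/
theorem PMC_recursion_a [Fintype F] [Fintype A] [DecidableEq F] [DecidableEq A]
    (Λ : Scenario F A) (π : F → ℝ≥0∞) (hπ : ∀ g, π g ≤ 1) (γ : A → ℝ≥0∞)
    (a : A) (hQa : Λ.Q a = ∅) :
    PF (Set.range (fun σ : Strategy Λ => (probS Λ π σ, maxCost Λ γ σ))) =
      PF (PsiA
        (PF (Set.range (fun σ0 : Strategy (Λ.reduceA a false) =>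
          (probS (Λ.reduceA a false) π σ0,
            maxCost (Λ.reduceA a false) (fun a' => γ a'.1) σ0))))
        (PF (Set.range (fun σ1 : Strategy (Λ.reduceA a true) =>
          (probS (Λ.reduceA a true) π σ1,
            maxCost (Λ.reduceA a true) (fun a' => γ a'.1) σ1))))
        (γ a)) := by
  classical
  set T0 : Set (ℝ≥0∞ × ℝ≥0∞) := Set.range (fun σ0 : Strategy (Λ.reduceA a false) =>
    (probS (Λ.reduceA a false) π σ0, maxCost (Λ.reduceA a false) (fun a' => γ a'.1) σ0))
    with hT0
  set T1 : Set (ℝ≥0∞ × ℝ≥0∞) := Set.range (fun σ1 : Strategy (Λ.reduceA a true) =>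
    (probS (Λ.reduceA a true) π σ1, maxCost (Λ.reduceA a true) (fun a' => γ a'.1) σ1))
    with hT1
  haveI : Finite (Strategy (Λ.reduceA a false)) := by unfold Strategy; infer_instance
  haveI : Finite (Strategy (Λ.reduceA a true)) := by unfold Strategy; infer_instance
  have hT0f : T0.Finite := Set.finite_range _
  have hT1f : T1.Finite := Set.finite_range _
  have hset : Set.range (fun σ : Strategy Λ => (probS Λ π σ, maxCost Λ γ σ)) =
      PsiA T0 T1 (γ a) := by
    ext d
    constructor
    · rintro ⟨σ, rfl⟩
      obtain ⟨b, σ', rfl⟩ := iota_surj Λ a hQa σ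
      cases b
      · exact Or.inl ⟨σ', by simp [probS_iota, maxCost_iota]⟩
      · refine Or.inr ⟨(probS (Λ.reduceA a true) π σ',
          maxCost (Λ.reduceA a true) (fun a' => γ a'.1) σ'), ⟨σ', rfl⟩, ?_⟩
        simp [probS_iota, maxCost_iota, add_comm]
    · rintro (⟨σ0, rfl⟩ | ⟨d2, ⟨σ1, rfl⟩, rfl⟩)
      · exact ⟨iota Λ a false σ0, by simp [probS_iota, maxCost_iota]⟩
      · exact ⟨iota Λ a true σ1, by simp [probS_iota, maxCost_iota, add_comm]⟩
  rw [hset]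
  apply PF_congr
  · rintro d (hd | ⟨d2, hd2, rfl⟩)
    · exact Or.inl (PF_subset _ hd)
    · exact Or.inr ⟨d2, PF_subset _ hd2, rfl⟩
  · rintro d (hd | ⟨d2, hd2, rfl⟩)
    · obtain ⟨d', hd', hle⟩ := exists_pf_le hT0f hd
      exact ⟨d', Or.inl hd', hle⟩
    · obtain ⟨d', hd', hle⟩ := exists_pf_le hT1f hd2
      exact ⟨(d'.1, d'.2 + γ a), Or.inr ⟨d', hd', rfl⟩, hle.1, add_le_add hle.2 le_rfl⟩
end

section
/- Let (Λ, π, γ) be a quantified scenario with all costs γ_a finite, such that some f ∈ F is minimal in F ∪ A with respect to ≺_Q (i.e. f ∈ Q_a for all a ∈ A), and let Λ^{f/0}, Λ^{f/1} be the reduced quantified scenarios obtained by substituting 0 (resp. 1) for the f-variable of φ and removing f. Then the probability–expected-cost Pareto front satisfies the recursion PEC(Λ̂) = SCPF(Ψ_F^e(PEC(Λ̂^{f/0}), PEC(Λ̂^{f/1}), π_f)), where Ψ_F^e(I₁,I₂,p) = {((1−p)·p₁ + p·p₂, (1−p)·c₁ + p·c₂) : (p₁,c₁) ∈ I₁, (p₂,c₂)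 ∈ I₂}. -/
variable {F A : Type}

/-- The reduced scenario `Λ^{f/b}`: substitute `b` for the `f`-variable of `φ`,
remove `f` from `F`, and set `Q'_a = Q_a \ {f}`. -/
def Scenario.reduceF [DecidableEq F] (Λ : Scenario F A) (f : F) (b : Bool) :
    Scenario {g : F // g ≠ f} A where
  φ := fun x y => Λ.φ (fun g => if h : g = f then b else x ⟨g, h⟩) y
  Q := fun a => (Λ.Q a).subtype (· ≠ f)
  chain := fun a a' => (Λ.chain a a').imp
    (fun h x hx => Finset.mem_subtype.mpr (h (Finset.mem_subtype.mp hx)))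
    (fun h x hx => Finset.mem_subtype.mpr (h (Finset.mem_subtype.mp hx)))

/-- Restriction of `x ∈ 𝔹^{Q_a}` to `𝔹^{Q_a \ {f}}` (the `x'` of the paper). -/
def restr [DecidableEq F] (Λ : Scenario F A) (f : F) (b : Bool) (a : A)
    (x : {f' : F // f' ∈ Λ.Q a} → Bool) :
    ({g // g ∈ (Λ.reduceF f b).Q a} → Bool) :=
  fun g => x ⟨g.1.1, Finset.mem_subtype.mp g.2⟩

/-- The composed strategy `σ⁰ ⋆ σ¹`, defined by
`(σ⁰ ⋆ σ¹)_a(x) = (¬x_f ∧ σ⁰_a(x')) ∨ (x_f ∧ σ¹_a(x'))`. -/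
def star [DecidableEq F] (Λ : Scenario F A) (f : F) (hf : ∀ a, f ∈ Λ.Q a)
    (σ0 : Strategy (Λ.reduceF f false)) (σ1 : Strategy (Λ.reduceF f true)) :
    Strategy Λ := fun a x =>
  (!(x ⟨f, hf a⟩) && σ0 a (restr Λ f false a x)) ||
    ((x ⟨f, hf a⟩) && σ1 a (restr Λ f true a x))

/-- Bernoulli weight of an outcome `x ∈ 𝔹^F` (real-valued). -/
noncomputable def wghtR [Fintype F] (π : F → ℝ) (x : F → Bool) : ℝ :=
  ∏ f, if x f then π f else 1 - π f

/-- Success probability `π̂(σ)` (real-valued). -/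
noncomputable def probR [Fintype F] [DecidableEq F] (Λ : Scenario F A)
    (π : F → ℝ) (σ : Strategy Λ) : ℝ :=
  ∑ x : F → Bool, wghtR π x * (if Λ.φ x (hatS Λ σ x) then 1 else 0)

/-- Expected cost `γ̂_e(σ)` (real-valued, costs finite). -/
noncomputable def expCostR [Fintype F] [DecidableEq F] [Fintype A] (Λ : Scenario F A)
    (π : F → ℝ) (γ : A → ℝ) (σ : Strategy Λ) : ℝ :=
  ∑ x : F → Bool, wghtR π x * ∑ a, if hatS Λ σ x a then γ a else 0

/-- `(p,c) ⊑ (p',c')` iff `p ≥ p'` and `c ≤ c'` (on `D = [0,1] × [0,∞) ⊆ ℝ²`). -/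
def sqleR (d d' : ℝ × ℝ) : Prop := d'.1 ≤ d.1 ∧ d.2 ≤ d'.2

/-- `d ⊏ d'` iff `d ⊑ d'` and `d ≠ d'`. -/
def sltR (d d' : ℝ × ℝ) : Prop := sqleR d d' ∧ d ≠ d'

/-- The line segment `ℓ(d₁,d₂) = {t·d₁ + (1−t)·d₂ : t ∈ [0,1]}` in `ℝ²`. -/
def seg (d₁ d₂ : ℝ × ℝ) : Set (ℝ × ℝ) :=
  {d | ∃ t ∈ Set.Icc (0 : ℝ) 1, d = t • d₁ + (1 - t) • d₂}

/-- The strictly convex Pareto front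
`SCPF(I) = {d ∈ I : ∀ d₁ d₂ ∈ I, ∀ d' ∈ ℓ(d₁,d₂), ¬(d' ⊏ d)}`. -/
def SCPF (I : Set (ℝ × ℝ)) : Set (ℝ × ℝ) :=
  {d ∈ I | ∀ d₁ ∈ I, ∀ d₂ ∈ I, ∀ d' ∈ seg d₁ d₂, ¬ sltR d' d}

/-- `Ψ_F^e(I₁,I₂,p)` (real-valued). -/
def PsiFeR (I₁ I₂ : Set (ℝ × ℝ)) (p : ℝ) : Set (ℝ × ℝ) :=
  {d | ∃ d₁ ∈ I₁, ∃ d₂ ∈ I₂, d = ((1 - p) * d₁.1 + p * d₂.1, (1 - p) * d₁.2 + p * d₂.2)}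


section AuxGeo
open Pointwise

lemma mem_seg_of_comb (s t : ℝ) {u v q : ℝ × ℝ} (hs : 0 ≤ s) (ht : 0 ≤ t)
    (hst : s + t = 1) (h1 : q.1 = s * u.1 + t * v.1) (h2 : q.2 = s * u.2 + t * v.2) :
    q ∈ seg u v := by
  refine ⟨s, ⟨hs, by linarith⟩, ?_⟩
  have h : (1 : ℝ) - s = t := by linarith
  ext <;> simp [h, h1, h2]

lemma tri_lemma {d x y w z : ℝ × ℝ} {a b c : ℝ} (ha : 0 ≤ a) (hb : 0 ≤ b) (hc : 0 ≤ c)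
    (hs : a + b + c = 1)
    (hz1 : z.1 = a * x.1 + b * y.1 + c * w.1) (hz2 : z.2 = a * x.2 + b * y.2 + c * w.2)
    (h1 : d.1 ≤ z.1) (h2 : z.2 ≤ d.2) (hzd : z ≠ d) :
    ∃ u v : ℝ × ℝ, (u = x ∨ u = y ∨ u = w) ∧ (v = x ∨ v = y ∨ v = w) ∧
      ∃ q ∈ seg u v, sltR q d := by
  by_cases hD : (x.1 - w.1) * (y.2 - w.2) - (x.2 - w.2) * (y.1 - w.1) = 0
  · -- degenerate (collinear) case
    by_cases hyw : y = w
    · refine ⟨x, w, Or.inl rfl, Or.inr (Or.inr rfl), z,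
        mem_seg_of_comb a (b + c) ha (by linarith) (by linarith) ?_ ?_, ⟨⟨h1, h2⟩, hzd⟩⟩
      · rw [hz1, hyw]; ring
      · rw [hz2, hyw]; ring
    · have hvne : y.1 - w.1 ≠ 0 ∨ y.2 - w.2 ≠ 0 := by
        by_contra h
        push_neg at h
        exact hyw (Prod.ext (by linarith [h.1]) (by linarith [h.2]))
      obtain ⟨κ, hκ1, hκ2⟩ : ∃ κ : ℝ, x.1 - w.1 = κ * (y.1 - w.1) ∧ x.2 - w.2 = κ * (y.2 - w.2) := by
        rcases hvne with h | h
        · refine ⟨(x.1 - w.1) / (y.1 - w.1), by field_simp, ?_⟩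
          rw [div_mul_eq_mul_div, eq_div_iff h]
          linear_combination -hD
        · refine ⟨(x.2 - w.2) / (y.2 - w.2), ?_, by field_simp⟩
          rw [div_mul_eq_mul_div, eq_div_iff h]
          linear_combination hD
      set m : ℝ := a * κ + b with hm
      have hzm1 : z.1 = w.1 + m * (y.1 - w.1) := by
        linear_combination hz1 + a * hκ1 + w.1 * hs
      have hzm2 : z.2 = w.2 + m * (y.2 - w.2) := by
        linear_combination hz2 + a * hκ2 + w.2 * hs
      rcases le_or_gt 0 m with hm0 | hm0
      · rcases le_or_gt m 1 with hm1 | hm1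
        · refine ⟨y, w, Or.inr (Or.inl rfl), Or.inr (Or.inr rfl), z,
            mem_seg_of_comb m (1 - m) hm0 (by linarith) (by ring) ?_ ?_, ⟨⟨h1, h2⟩, hzd⟩⟩
          · linear_combination hzm1
          · linear_combination hzm2
        · -- m > 1 : κ > 1, z on segment x y
          have hκ1' : 1 < κ := by
            by_contra h
            push_neg at h
            have := mul_le_of_le_one_right ha h
            rw [hm] at hm1; linarith
          have hκne : κ - 1 ≠ 0 := by intro h; linarith [sub_eq_zero.1 h]
          have hmκ : m ≤ κ := by
            have h1' : (1 - a) * 1 ≤ (1 - a) * κ :=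
              mul_le_mul_of_nonneg_left (by linarith) (by linarith)
            rw [hm]; nlinarith
          set s : ℝ := (m - 1) / (κ - 1) with hsdef
          have hsnum : s * (κ - 1) = m - 1 := by
            rw [hsdef]; field_simp
          refine ⟨x, y, Or.inl rfl, Or.inr (Or.inl rfl), z,
            mem_seg_of_comb s (1 - s) (div_nonneg (by linarith) (by linarith))
              ?_ (by ring) ?_ ?_, ⟨⟨h1, h2⟩, hzd⟩⟩
          · rw [sub_nonneg, hsdef, div_le_one (by linarith)]; linarith
          · linear_combination hzm1 - s * hκ1 - (y.1 - w.1) * hsnum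
          · linear_combination hzm2 - s * hκ2 - (y.2 - w.2) * hsnum
      · -- m < 0 : κ < 0, z on segment x w
        have hκ0 : κ < 0 := by
          by_contra h
          push_neg at h
          have := mul_nonneg ha h
          rw [hm] at hm0; linarith
        have hmκ : κ ≤ m := by
          have h1' : (1 - a) * κ ≤ 0 :=
            mul_nonpos_of_nonneg_of_nonpos (by linarith) hκ0.le
          rw [hm]; nlinarith
        set s : ℝ := m / κ with hsdef
        have hsnum : s * κ = m := by rw [hsdef, div_mul_cancel₀ _ (ne_of_lt hκ0)]
        have hs1 : s ≤ 1 := by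
          by_contra h
          push_neg at h
          have := mul_lt_mul_of_neg_right h hκ0
          rw [one_mul] at this
          linarith [hsnum]
        refine ⟨x, w, Or.inl rfl, Or.inr (Or.inr rfl), z,
          mem_seg_of_comb s (1 - s) (div_nonneg_of_nonpos hm0.le hκ0.le)
            (by linarith) (by ring) ?_ ?_, ⟨⟨h1, h2⟩, hzd⟩⟩
        · linear_combination hzm1 - s * hκ1 - (y.1 - w.1) * hsnum
        · linear_combination hzm2 - s * hκ2 - (y.2 - w.2) * hsnum
  · -- nondegenerate case: ray shooting in +x direction
    obtain ⟨lam, mu, key1, key2⟩ : ∃ lam mu : ℝ,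
        lam * (x.1 - w.1) + mu * (y.1 - w.1) = 1 ∧
        lam * (x.2 - w.2) + mu * (y.2 - w.2) = 0 := by
      refine ⟨(y.2 - w.2) / ((x.1 - w.1) * (y.2 - w.2) - (x.2 - w.2) * (y.1 - w.1)),
        (w.2 - x.2) / ((x.1 - w.1) * (y.2 - w.2) - (x.2 - w.2) * (y.1 - w.1)), ?_, ?_⟩
      · rw [div_mul_eq_mul_div, div_mul_eq_mul_div, ← add_div, div_eq_one_iff_eq hD]
        ring
      · field_simp
        ring
    have hneg : ∃ i : Fin 3, (![lam, mu, -(lam + mu)]) i < 0 := by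
      by_contra h
      push_neg at h
      have h0 := h 0; have h1' := h 1; have h2' := h 2
      simp only [Matrix.cons_val_zero, Matrix.cons_val_one, Matrix.head_cons,
        Matrix.cons_val_two, Matrix.tail_cons] at h0 h1' h2'
      have hl : lam = 0 := by linarith
      have hmu : mu = 0 := by linarith
      rw [hl, hmu] at key1; simp at key1
    set r : Fin 3 → ℝ := ![lam, mu, -(lam + mu)] with hr
    set co : Fin 3 → ℝ := ![a, b, c] with hco
    have hco_nonneg : ∀ i, 0 ≤ co i := by
      intro i; fin_cases i <;> simpa [hco]
    set N : Finset (Fin 3) := Finset.univ.filter (fun i => r i < 0) with hN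
    have hNne : N.Nonempty := by
      obtain ⟨i, hi⟩ := hneg
      exact ⟨i, Finset.mem_filter.2 ⟨Finset.mem_univ i, hi⟩⟩
    set U : ℝ := N.inf' hNne (fun i => co i / (-r i)) with hU
    have hU0 : 0 ≤ U := by
      apply Finset.le_inf'
      intro i hi
      have : r i < 0 := by simpa [hN] using hi
      exact div_nonneg (hco_nonneg i) (by linarith)
    obtain ⟨i₀, hi₀, hieq⟩ := Finset.exists_mem_eq_inf' hNne (fun i => co i / (-r i))
    have hri₀ : r i₀ < 0 := by simpa [hN] using hi₀
    have hzero : co i₀ + U * r i₀ = 0 := by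
      have hne : r i₀ ≠ 0 := ne_of_lt hri₀
      rw [hU, hieq, div_neg, neg_mul, div_mul_cancel₀ _ hne]
      ring
    have hpos : ∀ i, 0 ≤ co i + U * r i := by
      intro i
      rcases lt_or_ge (r i) 0 with h | h
      · have hle : U ≤ co i / (-r i) := Finset.inf'_le _ (by simp [hN, h])
        have h2' := mul_le_mul_of_nonpos_right hle (le_of_lt h)
        have h3 : co i / (-r i) * r i = -co i := by
          rw [div_neg, neg_mul, div_mul_cancel₀ _ (ne_of_lt h)]
        linarith
      · have := mul_nonneg hU0 h
        linarith [hco_nonneg i]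
    have hfull1 : z.1 + U = (a + U * lam) * x.1 + (b + U * mu) * y.1
        + (c + U * (-(lam + mu))) * w.1 := by
      linear_combination hz1 - U * key1
    have hfull2 : z.2 = (a + U * lam) * x.2 + (b + U * mu) * y.2
        + (c + U * (-(lam + mu))) * w.2 := by
      linear_combination hz2 - U * key2
    have hdom : sltR (z.1 + U, z.2) d := by
      refine ⟨⟨by show d.1 ≤ z.1 + U; linarith, h2⟩, ?_⟩
      intro he
      have e1 : z.1 + U = d.1 := by rw [← he]
      have e2 : z.2 = d.2 := by rw [← he]
      exact hzd (Prod.ext (by linarith) e2)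
    have hp0 : 0 ≤ a + U * lam := by simpa [hco, hr] using hpos 0
    have hp1 : 0 ≤ b + U * mu := by simpa [hco, hr] using hpos 1
    have hp2 : 0 ≤ c + U * (-(lam + mu)) := by simpa [hco, hr] using hpos 2
    have hzero3 : a + U * lam = 0 ∨ b + U * mu = 0 ∨ c + U * -(lam + mu) = 0 := by
      fin_cases i₀
      · exact Or.inl hzero
      · exact Or.inr (Or.inl hzero)
      · exact Or.inr (Or.inr hzero)
    rcases hzero3 with hz0 | hz0 | hz0
    · exact ⟨y, w, Or.inr (Or.inl rfl), Or.inr (Or.inr rfl), (z.1 + U, z.2),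
        mem_seg_of_comb _ _ hp1 hp2 (by linear_combination hs - hz0)
          (by linear_combination hfull1 + x.1 * hz0)
          (by linear_combination hfull2 + x.2 * hz0), hdom⟩
    · exact ⟨x, w, Or.inl rfl, Or.inr (Or.inr rfl), (z.1 + U, z.2),
        mem_seg_of_comb _ _ hp0 hp2 (by linear_combination hs - hz0)
          (by linear_combination hfull1 + y.1 * hz0)
          (by linear_combination hfull2 + y.2 * hz0), hdom⟩
    · exact ⟨x, y, Or.inl rfl, Or.inr (Or.inl rfl), (z.1 + U, z.2),
        mem_seg_of_comb _ _ hp0 hp1 (by linear_combination hs - hz0)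
          (by linear_combination hfull1 + w.1 * hz0)
          (by linear_combination hfull2 + w.2 * hz0), hdom⟩

/-- Claim C: a convex-hull point strictly dominating `d` yields a two-point segment
point strictly dominating `d`. -/
lemma claimC {X : Set (ℝ × ℝ)} {z d : ℝ × ℝ} (hz : z ∈ convexHull ℝ X)
    (h1 : d.1 ≤ z.1) (h2 : z.2 ≤ d.2) (hzd : z ≠ d) :
    ∃ u ∈ X, ∃ v ∈ X, ∃ q ∈ seg u v, sltR q d := by
  rw [convexHull_eq_union] at hz
  simp only [Set.mem_iUnion] at hz
  obtain ⟨t, hss, hai, hzt⟩ := hz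
  have hcard : t.card ≤ 3 := by
    have h := hai.card_le_finrank_succ
    rw [Fintype.card_coe] at h
    have h2' : Module.finrank ℝ ↥(vectorSpan ℝ (Set.range (Subtype.val : ↥t → ℝ × ℝ))) ≤
        Module.finrank ℝ (ℝ × ℝ) := Submodule.finrank_le _
    have h3 : Module.finrank ℝ (ℝ × ℝ) = 2 := by simp
    omega
  obtain ⟨W, hW0, hW1, hWc⟩ := Finset.mem_convexHull.1 hzt
  have hzz : z = ∑ y ∈ t, W y • y := by
    rw [← hWc, Finset.centerMass_eq_of_sum_1 _ _ hW1]
    simp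
  have hfin : t.card = 0 ∨ t.card = 1 ∨ t.card = 2 ∨ t.card = 3 := by omega
  rcases hfin with h | h | h | h
  · rw [Finset.card_eq_zero] at h
    subst h
    simp at hzt
  · obtain ⟨u, rfl⟩ := Finset.card_eq_one.1 h
    have huX : u ∈ X := hss (by simp)
    have base1 : z.1 = W u * u.1 := by rw [hzz, Finset.sum_singleton]; rfl
    have base2 : z.2 = W u * u.2 := by rw [hzz, Finset.sum_singleton]; rfl
    have hW1' : W u = 1 := by simpa using hW1
    obtain ⟨u', v', hu', hv', q, hq, hdom⟩ :=
      tri_lemma (d := d) (x := u) (y := u) (w := u) (z := z)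
        (a := W u) (b := 0) (c := 0)
        (hW0 u (by simp)) (le_refl 0) (le_refl 0) (by rw [hW1']; ring)
        (by rw [base1]; ring) (by rw [base2]; ring) h1 h2 hzd
    rcases hu' with rfl | rfl | rfl <;> rcases hv' with rfl | rfl | rfl <;>
      exact ⟨_, huX, _, huX, q, hq, hdom⟩
  · obtain ⟨u, v, huv, rfl⟩ := Finset.card_eq_two.1 h
    have huX : u ∈ X := hss (by simp)
    have hvX : v ∈ X := hss (by simp)
    have e : ∑ y ∈ ({u, v} : Finset (ℝ × ℝ)), W y • y = W u • u + W v • v := by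
      rw [Finset.sum_insert (by simp [huv]), Finset.sum_singleton]
    have base1 : z.1 = W u * u.1 + W v * v.1 := by rw [hzz, e]; rfl
    have base2 : z.2 = W u * u.2 + W v * v.2 := by rw [hzz, e]; rfl
    have hsum : W u + W v = 1 := by
      rw [← hW1, Finset.sum_insert (by simp [huv]), Finset.sum_singleton]
    obtain ⟨u', v', hu', hv', q, hq, hdom⟩ :=
      tri_lemma (d := d) (x := u) (y := v) (w := v) (z := z)
        (a := W u) (b := W v) (c := 0)
        (hW0 u (by simp)) (hW0 v (by simp)) (le_refl 0) (by rw [← hsum]; ring)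
        (by rw [base1]; ring) (by rw [base2]; ring) h1 h2 hzd
    rcases hu' with rfl | rfl | rfl <;> rcases hv' with rfl | rfl | rfl <;>
      first
        | exact ⟨_, huX, _, huX, q, hq, hdom⟩
        | exact ⟨_, huX, _, hvX, q, hq, hdom⟩
        | exact ⟨_, hvX, _, huX, q, hq, hdom⟩
        | exact ⟨_, hvX, _, hvX, q, hq, hdom⟩
  · obtain ⟨u, v, w, huv, huw, hvw, rfl⟩ := Finset.card_eq_three.1 h
    have huX : u ∈ X := hss (by simp)
    have hvX : v ∈ X := hss (by simp)
    have hwX : w ∈ X := hss (by simp)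
    have e : ∑ y ∈ ({u, v, w} : Finset (ℝ × ℝ)), W y • y = W u • u + W v • v + W w • w := by
      rw [Finset.sum_insert (by simp [huv, huw]), Finset.sum_insert (by simp [hvw]),
        Finset.sum_singleton, add_assoc]
    have base1 : z.1 = W u * u.1 + W v * v.1 + W w * w.1 := by rw [hzz, e]; rfl
    have base2 : z.2 = W u * u.2 + W v * v.2 + W w * w.2 := by rw [hzz, e]; rfl
    have hsum : W u + W v + W w = 1 := by
      rw [← hW1, Finset.sum_insert (by simp [huv, huw]), Finset.sum_insert (by simp [hvw]),
        Finset.sum_singleton, add_assoc]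
    obtain ⟨u', v', hu', hv', q, hq, hdom⟩ :=
      tri_lemma (d := d) (x := u) (y := v) (w := w) (z := z)
        (hW0 u (by simp)) (hW0 v (by simp)) (hW0 w (by simp)) hsum
        base1 base2 h1 h2 hzd
    rcases hu' with rfl | rfl | rfl <;> rcases hv' with rfl | rfl | rfl <;>
      first
        | exact ⟨_, huX, _, huX, q, hq, hdom⟩
        | exact ⟨_, huX, _, hvX, q, hq, hdom⟩
        | exact ⟨_, huX, _, hwX, q, hq, hdom⟩
        | exact ⟨_, hvX, _, huX, q, hq, hdom⟩
        | exact ⟨_, hvX, _, hvX, q, hq, hdom⟩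
        | exact ⟨_, hvX, _, hwX, q, hq, hdom⟩
        | exact ⟨_, hwX, _, huX, q, hq, hdom⟩
        | exact ⟨_, hwX, _, hvX, q, hq, hdom⟩
        | exact ⟨_, hwX, _, hwX, q, hq, hdom⟩

lemma sqleR_refl (d : ℝ × ℝ) : sqleR d d := ⟨le_refl _, le_refl _⟩

lemma sqleR_trans {a b c : ℝ × ℝ} (h : sqleR a b) (h' : sqleR b c) : sqleR a c :=
  ⟨h'.1.trans h.1, h.2.trans h'.2⟩

lemma sqleR_sltR_trans {a b c : ℝ × ℝ} (h : sqleR a b) (h' : sltR b c) : sltR a c := by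
  refine ⟨sqleR_trans h h'.1, ?_⟩
  rintro rfl
  exact h'.2 (Prod.ext (le_antisymm h.1 h'.1.1) (le_antisymm h'.1.2 h.2))

lemma seg_subset_convexHull {X : Set (ℝ × ℝ)} {u v : ℝ × ℝ} (hu : u ∈ X) (hv : v ∈ X) :
    seg u v ⊆ convexHull ℝ X := by
  rintro q ⟨t, ⟨ht0, ht1⟩, rfl⟩
  exact (convex_convexHull ℝ X) (subset_convexHull ℝ X hu) (subset_convexHull ℝ X hv)
    ht0 (by linarith) (by ring)

lemma comb_same (t : ℝ) (a : ℝ × ℝ) : t • a + (1 - t) • a = a := by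
  ext
  · show t * a.1 + (1 - t) * a.1 = a.1; ring
  · show t * a.2 + (1 - t) * a.2 = a.2; ring

lemma exists_hull_dom {S : Set (ℝ × ℝ)} {x : ℝ × ℝ} (hx : x ∈ S) (hnx : x ∉ SCPF S) :
    ∃ z ∈ convexHull ℝ (S \ {x}), sltR z x := by
  have h : ¬ (∀ d₁ ∈ S, ∀ d₂ ∈ S, ∀ d' ∈ seg d₁ d₂, ¬ sltR d' x) :=
    fun hcond => hnx ⟨hx, hcond⟩
  push_neg at h
  obtain ⟨a, haS, b, hbS, q, hq, hdom⟩ := h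
  by_cases hax : a = x
  · subst hax
    by_cases hbx : b = a
    · subst hbx
      obtain ⟨t, ⟨ht0, ht1⟩, rfl⟩ := hq
      rw [comb_same] at hdom
      exact absurd rfl hdom.2
    · obtain ⟨t, ⟨ht0, ht1⟩, rfl⟩ := hq
      have h1' : a.1 ≤ t * a.1 + (1 - t) * b.1 := hdom.1.1
      have h2' : t * a.2 + (1 - t) * b.2 ≤ a.2 := hdom.1.2
      have ht1' : t < 1 := by
        rcases lt_or_eq_of_le ht1 with h | h
        · exact h
        · exfalso
          subst h
          exact hdom.2 (by norm_num)
      have hb1 : a.1 ≤ b.1 := by nlinarith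
      have hb2 : b.2 ≤ a.2 := by nlinarith
      exact ⟨b, subset_convexHull ℝ _ ⟨hbS, hbx⟩, ⟨hb1, hb2⟩, hbx⟩
  · by_cases hbx : b = x
    · subst hbx
      obtain ⟨t, ⟨ht0, ht1⟩, rfl⟩ := hq
      have h1' : b.1 ≤ t * a.1 + (1 - t) * b.1 := hdom.1.1
      have h2' : t * a.2 + (1 - t) * b.2 ≤ b.2 := hdom.1.2
      have ht0' : 0 < t := by
        rcases lt_or_eq_of_le ht0 with h | h
        · exact h
        · exfalso
          rw [← h] at hdom
          exact hdom.2 (by norm_num)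
      have ha1 : b.1 ≤ a.1 := by nlinarith
      have ha2 : a.2 ≤ b.2 := by nlinarith
      exact ⟨a, subset_convexHull ℝ _ ⟨haS, hax⟩, ⟨ha1, ha2⟩, hax⟩
    · exact ⟨q, seg_subset_convexHull (X := S \ {x})
        (show a ∈ S \ {x} from ⟨haS, hax⟩) (show b ∈ S \ {x} from ⟨hbS, hbx⟩) hq, hdom⟩

lemma SCPF_diff {S : Set (ℝ × ℝ)} {x : ℝ × ℝ} (hx : x ∈ S) (hnx : x ∉ SCPF S) :
    SCPF (S \ {x}) = SCPF S := by
  apply Set.Subset.antisymm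
  · rintro y ⟨hyS, hycond⟩
    refine ⟨hyS.1, ?_⟩
    rintro a haS b hbS q hq hdom
    obtain ⟨z, hzc, hzx⟩ := exists_hull_dom hx hnx
    have ha' : ∃ a', a' ∈ convexHull ℝ (S \ {x}) ∧ sqleR a' a := by
      by_cases h : a = x
      · exact ⟨z, hzc, h ▸ hzx.1⟩
      · exact ⟨a, subset_convexHull ℝ _ ⟨haS, h⟩, sqleR_refl a⟩
    have hb' : ∃ b', b' ∈ convexHull ℝ (S \ {x}) ∧ sqleR b' b := by
      by_cases h : b = x
      · exact ⟨z, hzc, h ▸ hzx.1⟩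
      · exact ⟨b, subset_convexHull ℝ _ ⟨hbS, h⟩, sqleR_refl b⟩
    obtain ⟨a', ha'c, ha'le⟩ := ha'
    obtain ⟨b', hb'c, hb'le⟩ := hb'
    obtain ⟨t, ⟨ht0, ht1⟩, rfl⟩ := hq
    have hq'c : t • a' + (1 - t) • b' ∈ convexHull ℝ (S \ {x}) :=
      (convex_convexHull ℝ (S \ {x})) ha'c hb'c ht0 (by linarith) (by ring)
    have hle : sqleR (t • a' + (1 - t) • b') (t • a + (1 - t) • b) :=
      ⟨add_le_add (mul_le_mul_of_nonneg_left ha'le.1 ht0)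
        (mul_le_mul_of_nonneg_left hb'le.1 (by linarith)),
       add_le_add (mul_le_mul_of_nonneg_left ha'le.2 ht0)
        (mul_le_mul_of_nonneg_left hb'le.2 (by linarith))⟩
    have hsl : sltR (t • a' + (1 - t) • b') y := sqleR_sltR_trans hle hdom
    obtain ⟨u, hu, v, hv, q'', hq'', hdom''⟩ := claimC hq'c hsl.1.1 hsl.1.2 hsl.2
    exact hycond u hu v hv q'' hq'' hdom''
  · rintro y ⟨hyS, hycond⟩
    have hyx : y ≠ x := fun h => hnx (h ▸ ⟨hyS, hycond⟩)
    exact ⟨⟨hyS, hyx⟩, fun a ha b hb q hq => hycond a ha.1 b hb.1 q hq⟩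

lemma claimD (S : Finset (ℝ × ℝ)) : ∀ x ∈ S, ∃ z ∈ convexHull ℝ (SCPF ↑S), sqleR z x := by
  induction S using Finset.strongInduction with
  | _ S ih =>
    intro x hxS
    by_cases hx : x ∈ SCPF (↑S : Set (ℝ × ℝ))
    · exact ⟨x, subset_convexHull ℝ _ hx, sqleR_refl x⟩
    · obtain ⟨z, hzc, hzx⟩ := exists_hull_dom (show x ∈ (↑S : Set (ℝ × ℝ)) from hxS) hx
      have hErase : ((S.erase x : Finset (ℝ × ℝ)) : Set (ℝ × ℝ)) = (↑S : Set (ℝ × ℝ)) \ {x} :=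
        by simp [Finset.coe_erase]
      rw [← hErase] at hzc
      obtain ⟨W, hW0, hW1, hWc⟩ := Finset.mem_convexHull.1 hzc
      have hzeq : z = ∑ y ∈ S.erase x, W y • y := by
        rw [← hWc, Finset.centerMass_eq_of_sum_1 _ _ hW1]
        simp
      choose g hg1 hg2 using
        (fun y (hy : y ∈ S.erase x) => ih (S.erase x) (Finset.erase_ssubset hxS) y hy)
      refine ⟨∑ y ∈ (S.erase x).attach, W y.1 • g y.1 y.2, ?_, ?_⟩
      · have hmem : ∑ y ∈ (S.erase x).attach, W y.1 • g y.1 y.2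
            ∈ convexHull ℝ (SCPF (↑(S.erase x) : Set (ℝ × ℝ))) := by
          apply (convex_convexHull ℝ _).sum_mem
          · exact fun y _ => hW0 y.1 y.2
          · rw [Finset.sum_attach _ W]; exact hW1
          · exact fun y _ => hg1 y.1 y.2
        rwa [hErase, SCPF_diff (show x ∈ (↑S : Set (ℝ × ℝ)) from hxS) hx] at hmem
      · refine sqleR_trans (sqleR_trans ?_ hzx.1) (sqleR_refl x)
        constructor
        · have e1 : z.1 = ∑ y ∈ (S.erase x).attach, W y.1 * (y.1 : ℝ × ℝ).1 := by
            rw [hzeq, ← Finset.sum_attach _ (fun y => W y • y), Prod.fst_sum]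
            rfl
          have e2 : (∑ y ∈ (S.erase x).attach, W y.1 • g y.1 y.2).1
              = ∑ y ∈ (S.erase x).attach, W y.1 * (g y.1 y.2).1 := by
            rw [Prod.fst_sum]; rfl
          rw [e1, e2]
          exact Finset.sum_le_sum fun y _ =>
            mul_le_mul_of_nonneg_left (hg2 y.1 y.2).1 (hW0 y.1 y.2)
        · have e1 : z.2 = ∑ y ∈ (S.erase x).attach, W y.1 * (y.1 : ℝ × ℝ).2 := by
            rw [hzeq, ← Finset.sum_attach _ (fun y => W y • y), Prod.snd_sum]
            rfl
          have e2 : (∑ y ∈ (S.erase x).attach, W y.1 • g y.1 y.2).2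
              = ∑ y ∈ (S.erase x).attach, W y.1 * (g y.1 y.2).2 := by
            rw [Prod.snd_sum]; rfl
          rw [e1, e2]
          exact Finset.sum_le_sum fun y _ =>
            mul_le_mul_of_nonneg_left (hg2 y.1 y.2).2 (hW0 y.1 y.2)

/-- Nonemptiness of the SCPF of a finite nonempty set. -/
lemma SCPF_nonempty {I : Set (ℝ × ℝ)} (hfin : I.Finite) (hne : I.Nonempty) :
    (SCPF I).Nonempty := by
  obtain ⟨d, hdI, hd⟩ := Set.exists_min_image I
    (fun w => toLex ((-w.1, w.2) : ℝ × ℝ)) hfin hne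
  refine ⟨d, hdI, ?_⟩
  rintro d₁ hd₁ d₂ hd₂ d' ⟨t, ⟨ht0, ht1⟩, rfl⟩ ⟨⟨hle1, hle2⟩, hne'⟩
  have h1 := Prod.Lex.le_iff.1 (hd d₁ hd₁)
  have h2 := Prod.Lex.le_iff.1 (hd d₂ hd₂)
  simp only [ofLex_toLex] at h1 h2
  have k1 : d₁.1 ≤ d.1 ∧ (d₁.1 = d.1 → d.2 ≤ d₁.2) := by
    rcases h1 with h | ⟨h, h'⟩
    · exact ⟨by linarith, fun he => by simp [he] at h⟩
    · exact ⟨by linarith, fun _ => h'⟩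
  have k2 : d₂.1 ≤ d.1 ∧ (d₂.1 = d.1 → d.2 ≤ d₂.2) := by
    rcases h2 with h | ⟨h, h'⟩
    · exact ⟨by linarith, fun he => by simp [he] at h⟩
    · exact ⟨by linarith, fun _ => h'⟩
  have hfst : (t • d₁ + (1 - t) • d₂).1 = t * d₁.1 + (1 - t) * d₂.1 := rfl
  have hsnd : (t • d₁ + (1 - t) • d₂).2 = t * d₁.2 + (1 - t) * d₂.2 := rfl
  rw [hfst] at hle1; rw [hsnd] at hle2
  -- first coordinates must be equal
  have e1 : t * (d.1 - d₁.1) = 0 ∧ (1 - t) * (d.1 - d₂.1) = 0 := by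
    constructor <;> nlinarith [mul_nonneg ht0 (sub_nonneg.2 k1.1),
      mul_nonneg (sub_nonneg.2 ht1) (sub_nonneg.2 k2.1)]
  have c1 : t * d₁.2 ≥ t * d.2 := by
    rcases eq_or_lt_of_le ht0 with h | h
    · simp [← h]
    · have : d₁.1 = d.1 := by
        rcases mul_eq_zero.1 e1.1 with h' | h'
        · exact absurd h'.symm h.ne
        · linarith
      exact mul_le_mul_of_nonneg_left (k1.2 this) ht0
  have c2 : (1 - t) * d₂.2 ≥ (1 - t) * d.2 := by
    rcases eq_or_lt_of_le (sub_nonneg.2 ht1) with h | h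
    · simp [← h]
    · have : d₂.1 = d.1 := by
        rcases mul_eq_zero.1 e1.2 with h' | h'
        · exact absurd h'.symm h.ne
        · linarith
      exact mul_le_mul_of_nonneg_left (k2.2 this) (by linarith)
  have hs2 : t * d₁.2 + (1 - t) * d₂.2 = d.2 := by nlinarith
  have hs1 : t * d₁.1 + (1 - t) * d₂.1 = d.1 := by nlinarith
  exact hne' (Prod.ext (by rw [hfst, hs1]) (by rw [hsnd, hs2]))

lemma PsiFeR_eq (A B : Set (ℝ × ℝ)) (p : ℝ) : PsiFeR A B p = (1 - p) • A + p • B := by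
  ext d
  simp only [PsiFeR, Set.mem_setOf_eq, Set.mem_add, Set.mem_smul_set]
  constructor
  · rintro ⟨d1, h1, d2, h2, rfl⟩
    exact ⟨_, ⟨d1, h1, rfl⟩, _, ⟨d2, h2, rfl⟩, rfl⟩
  · rintro ⟨x, ⟨d1, h1, rfl⟩, y, ⟨d2, h2, rfl⟩, rfl⟩
    exact ⟨d1, h1, d2, h2, rfl⟩

lemma hull_psi {A B : Set (ℝ × ℝ)} {p : ℝ} {w0 w1 : ℝ × ℝ}
    (h0 : w0 ∈ convexHull ℝ A) (h1 : w1 ∈ convexHull ℝ B) :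
    ((1 - p) * w0.1 + p * w1.1, (1 - p) * w0.2 + p * w1.2) ∈ convexHull ℝ (PsiFeR A B p) := by
  rw [PsiFeR_eq, convexHull_add, convexHull_smul, convexHull_smul]
  exact Set.add_mem_add (Set.smul_mem_smul_set h0) (Set.smul_mem_smul_set h1)

lemma main_set (p : ℝ) (hp0 : 0 ≤ p) (hp1 : p ≤ 1) (T0 T1 : Set (ℝ × ℝ))
    (h0 : T0.Finite) (h1 : T1.Finite) (hn0 : T0.Nonempty) (hn1 : T1.Nonempty) :
    SCPF (PsiFeR T0 T1 p) = SCPF (PsiFeR (SCPF T0) (SCPF T1) p) := by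
  have hsub : PsiFeR (SCPF T0) (SCPF T1) p ⊆ PsiFeR T0 T1 p := by
    rintro d ⟨d1, h1', d2, h2', rfl⟩
    exact ⟨d1, h1'.1, d2, h2'.1, rfl⟩
  apply Set.Subset.antisymm
  · -- ⊆ : SCPF S ⊆ SCPF S'
    rintro d ⟨⟨d0, hd0, d1, hd1, rfl⟩, hcond⟩
    have H0 : ∃ d0' ∈ SCPF T0,
        (((1 - p) * d0'.1 + p * d1.1, (1 - p) * d0'.2 + p * d1.2) : ℝ × ℝ)
          = ((1 - p) * d0.1 + p * d1.1, (1 - p) * d0.2 + p * d1.2) := by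
      rcases lt_or_eq_of_le hp1 with hlt | heq
      · refine ⟨d0, ⟨hd0, ?_⟩, rfl⟩
        rintro a ha b hb q ⟨t, ⟨ht0', ht1'⟩, rfl⟩ hdomq
        apply hcond ((1 - p) * a.1 + p * d1.1, (1 - p) * a.2 + p * d1.2)
          ⟨a, ha, d1, hd1, rfl⟩
          ((1 - p) * b.1 + p * d1.1, (1 - p) * b.2 + p * d1.2)
          ⟨b, hb, d1, hd1, rfl⟩
          ((1 - p) * (t • a + (1 - t) • b).1 + p * d1.1,
            (1 - p) * (t • a + (1 - t) • b).2 + p * d1.2)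
          ⟨t, ⟨ht0', ht1'⟩, by
            ext
            · show (1 - p) * (t * a.1 + (1 - t) * b.1) + p * d1.1
                = t * ((1 - p) * a.1 + p * d1.1) + (1 - t) * ((1 - p) * b.1 + p * d1.1)
              ring
            · show (1 - p) * (t * a.2 + (1 - t) * b.2) + p * d1.2
                = t * ((1 - p) * a.2 + p * d1.2) + (1 - t) * ((1 - p) * b.2 + p * d1.2)
              ring⟩
        refine ⟨⟨?_, ?_⟩, ?_⟩
        · exact add_le_add_left (mul_le_mul_of_nonneg_left hdomq.1.1 (by linarith)) _
        · exact add_le_add_left (mul_le_mul_of_nonneg_left hdomq.1.2 (by linarith)) _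
        · intro he
          have e1 : (1 - p) * (t • a + (1 - t) • b).1 + p * d1.1
              = (1 - p) * d0.1 + p * d1.1 := congrArg Prod.fst he
          have e2 : (1 - p) * (t • a + (1 - t) • b).2 + p * d1.2
              = (1 - p) * d0.2 + p * d1.2 := congrArg Prod.snd he
          have hp' : (1 : ℝ) - p ≠ 0 := by linarith
          apply hdomq.2
          apply Prod.ext
          · have := mul_left_cancel₀ hp' (by linarith : (1 - p) * (t • a + (1 - t) • b).1 = (1 - p) * d0.1)
            exact this
          · exact mul_left_cancel₀ hp' (by linarith : (1 - p) * (t • a + (1 - t) • b).2 = (1 - p) * d0.2)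
      · obtain ⟨e, he⟩ := SCPF_nonempty h0 hn0
        subst heq
        exact ⟨e, he, by norm_num⟩
    obtain ⟨d0', hd0', heq0⟩ := H0
    have H1 : ∃ d1' ∈ SCPF T1,
        (((1 - p) * d0'.1 + p * d1'.1, (1 - p) * d0'.2 + p * d1'.2) : ℝ × ℝ)
          = ((1 - p) * d0'.1 + p * d1.1, (1 - p) * d0'.2 + p * d1.2) := by
      rcases lt_or_eq_of_le hp0 with hlt | heq
      · refine ⟨d1, ⟨hd1, ?_⟩, rfl⟩
        rintro a ha b hb q ⟨t, ⟨ht0', ht1'⟩, rfl⟩ hdomq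
        apply hcond ((1 - p) * d0'.1 + p * a.1, (1 - p) * d0'.2 + p * a.2)
          ⟨d0', hd0'.1, a, ha, rfl⟩
          ((1 - p) * d0'.1 + p * b.1, (1 - p) * d0'.2 + p * b.2)
          ⟨d0', hd0'.1, b, hb, rfl⟩
          ((1 - p) * d0'.1 + p * (t • a + (1 - t) • b).1,
            (1 - p) * d0'.2 + p * (t • a + (1 - t) • b).2)
          ⟨t, ⟨ht0', ht1'⟩, by
            ext
            · show (1 - p) * d0'.1 + p * (t * a.1 + (1 - t) * b.1)
                = t * ((1 - p) * d0'.1 + p * a.1) + (1 - t) * ((1 - p) * d0'.1 + p * b.1)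
              ring
            · show (1 - p) * d0'.2 + p * (t * a.2 + (1 - t) * b.2)
                = t * ((1 - p) * d0'.2 + p * a.2) + (1 - t) * ((1 - p) * d0'.2 + p * b.2)
              ring⟩
        rw [← heq0]
        refine ⟨⟨?_, ?_⟩, ?_⟩
        · exact add_le_add_right (mul_le_mul_of_nonneg_left hdomq.1.1 (by linarith)) _
        · exact add_le_add_right (mul_le_mul_of_nonneg_left hdomq.1.2 (by linarith)) _
        · intro he
          have e1 : (1 - p) * d0'.1 + p * (t • a + (1 - t) • b).1
              = (1 - p) * d0'.1 + p * d1.1 := congrArg Prod.fst he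
          have e2 : (1 - p) * d0'.2 + p * (t • a + (1 - t) • b).2
              = (1 - p) * d0'.2 + p * d1.2 := congrArg Prod.snd he
          have hp' : p ≠ 0 := by linarith
          apply hdomq.2
          apply Prod.ext
          · exact mul_left_cancel₀ hp' (by linarith : p * (t • a + (1 - t) • b).1 = p * d1.1)
          · exact mul_left_cancel₀ hp' (by linarith : p * (t • a + (1 - t) • b).2 = p * d1.2)
      · obtain ⟨e, he⟩ := SCPF_nonempty h1 hn1
        rw [← heq]
        exact ⟨e, he, by norm_num⟩
    obtain ⟨d1', hd1', heq1⟩ := H1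
    refine ⟨⟨d0', hd0', d1', hd1', (heq1.trans heq0).symm⟩, ?_⟩
    exact fun a ha b hb q hq => hcond a (hsub ha) b (hsub hb) q hq
  · -- ⊇ : SCPF S' ⊆ SCPF S
    rintro d ⟨hdS', hcond'⟩
    have hD0 : ∀ e ∈ T0, ∃ z ∈ convexHull ℝ (SCPF T0), sqleR z e := by
      intro e he
      have h := claimD h0.toFinset e (h0.mem_toFinset.2 he)
      rwa [h0.coe_toFinset] at h
    have hD1 : ∀ e ∈ T1, ∃ z ∈ convexHull ℝ (SCPF T1), sqleR z e := by
      intro e he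
      have h := claimD h1.toFinset e (h1.mem_toFinset.2 he)
      rwa [h1.coe_toFinset] at h
    refine ⟨hsub hdS', ?_⟩
    rintro A ⟨a0, ha0, a1, ha1, rfl⟩ B ⟨b0, hb0, b1, hb1, rfl⟩ q hq hdomq
    obtain ⟨wa0, hwa0c, hwa0le⟩ := hD0 a0 ha0
    obtain ⟨wa1, hwa1c, hwa1le⟩ := hD1 a1 ha1
    obtain ⟨wb0, hwb0c, hwb0le⟩ := hD0 b0 hb0
    obtain ⟨wb1, hwb1c, hwb1le⟩ := hD1 b1 hb1
    have hA' := hull_psi (p := p) hwa0c hwa1c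
    have hB' := hull_psi (p := p) hwb0c hwb1c
    have hAle : sqleR ((1 - p) * wa0.1 + p * wa1.1, (1 - p) * wa0.2 + p * wa1.2)
        ((1 - p) * a0.1 + p * a1.1, (1 - p) * a0.2 + p * a1.2) :=
      ⟨add_le_add (mul_le_mul_of_nonneg_left hwa0le.1 (by linarith))
          (mul_le_mul_of_nonneg_left hwa1le.1 hp0),
        add_le_add (mul_le_mul_of_nonneg_left hwa0le.2 (by linarith))
          (mul_le_mul_of_nonneg_left hwa1le.2 hp0)⟩
    have hBle : sqleR ((1 - p) * wb0.1 + p * wb1.1, (1 - p) * wb0.2 + p * wb1.2)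
        ((1 - p) * b0.1 + p * b1.1, (1 - p) * b0.2 + p * b1.2) :=
      ⟨add_le_add (mul_le_mul_of_nonneg_left hwb0le.1 (by linarith))
          (mul_le_mul_of_nonneg_left hwb1le.1 hp0),
        add_le_add (mul_le_mul_of_nonneg_left hwb0le.2 (by linarith))
          (mul_le_mul_of_nonneg_left hwb1le.2 hp0)⟩
    obtain ⟨t, ⟨ht0', ht1'⟩, rfl⟩ := hq
    have hq'c : t • ((1 - p) * wa0.1 + p * wa1.1, (1 - p) * wa0.2 + p * wa1.2)
        + (1 - t) • ((1 - p) * wb0.1 + p * wb1.1, (1 - p) * wb0.2 + p * wb1.2)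
        ∈ convexHull ℝ (PsiFeR (SCPF T0) (SCPF T1) p) :=
      (convex_convexHull ℝ _) hA' hB' ht0' (by linarith) (by ring)
    have hle : sqleR
        (t • ((1 - p) * wa0.1 + p * wa1.1, (1 - p) * wa0.2 + p * wa1.2)
          + (1 - t) • ((1 - p) * wb0.1 + p * wb1.1, (1 - p) * wb0.2 + p * wb1.2))
        (t • ((1 - p) * a0.1 + p * a1.1, (1 - p) * a0.2 + p * a1.2)
          + (1 - t) • ((1 - p) * b0.1 + p * b1.1, (1 - p) * b0.2 + p * b1.2)) :=
      ⟨add_le_add (mul_le_mul_of_nonneg_left hAle.1 ht0')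
          (mul_le_mul_of_nonneg_left hBle.1 (by linarith)),
        add_le_add (mul_le_mul_of_nonneg_left hAle.2 ht0')
          (mul_le_mul_of_nonneg_left hBle.2 (by linarith))⟩
    have hsl := sqleR_sltR_trans hle hdomq
    obtain ⟨u, hu, v, hv, q'', hq'', hdom''⟩ := claimC hq'c hsl.1.1 hsl.1.2 hsl.2
    exact hcond' u hu v hv q'' hq'' hdom''

end AuxGeo

section Aux

variable [Fintype F] [DecidableEq F] (f : F)

/-- Extension of `x' : 𝔹^{F \ f}` by value `b` at `f`. -/
def extF (b : Bool) (x' : {g : F // g ≠ f} → Bool) : F → Bool :=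
  fun g => if h : g = f then b else x' ⟨g, h⟩

def splitEquiv : (Bool × ({g : F // g ≠ f} → Bool)) ≃ (F → Bool) where
  toFun p := extF f p.1 p.2
  invFun x := (x f, fun g => x g.1)
  left_inv p := by
    ext
    · simp [extF]
    · simp only [extF]
      rw [dif_neg]
  right_inv x := by
    funext g
    by_cases h : g = f
    · subst h; simp [extF]
    · simp [extF, h]

lemma sum_split (G : (F → Bool) → ℝ) :
    ∑ x : F → Bool, G x = (∑ x' : {g : F // g ≠ f} → Bool, G (extF f false x'))
      + ∑ x' : {g : F // g ≠ f} → Bool, G (extF f true x') := by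
  rw [← Equiv.sum_comp (splitEquiv f) G, Fintype.sum_prod_type, Fintype.sum_bool]
  rw [add_comm]
  rfl

lemma wght_split (π : F → ℝ) (b : Bool) (x' : {g : F // g ≠ f} → Bool) :
    wghtR π (extF f b x') = (if b then π f else 1 - π f) * wghtR (fun g => π g.1) x' := by
  unfold wghtR
  rw [← Finset.mul_prod_erase Finset.univ _ (Finset.mem_univ f)]
  congr 1
  · simp [extF]
  · rw [Finset.prod_subtype (Finset.univ.erase f)
      (p := fun g => g ≠ f) (fun g => by simp)]
    apply Finset.prod_congr rfl
    intro g _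
    have : extF f b x' g.1 = x' g := dif_neg g.2
    rw [this]

variable (Λ : Scenario F A) (hf : ∀ a, f ∈ Λ.Q a)

lemma hatS_star_false (σ0 : Strategy (Λ.reduceF f false)) (σ1 : Strategy (Λ.reduceF f true))
    (x' : {g : F // g ≠ f} → Bool) :
    hatS Λ (star Λ f hf σ0 σ1) (extF f false x') = hatS (Λ.reduceF f false) σ0 x' := by
  funext a
  show star Λ f hf σ0 σ1 a (fun f' => extF f false x' f'.1) = σ0 a (fun g => x' g.1)
  have h1 : extF f false x' f = false := by simp [extF]
  simp only [_root_.star, h1, Bool.not_false, Bool.true_and, Bool.false_and, Bool.or_false]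
  congr 1
  funext g
  show extF f false x' g.1.1 = x' g.1
  exact dif_neg g.1.2

lemma hatS_star_true (σ0 : Strategy (Λ.reduceF f false)) (σ1 : Strategy (Λ.reduceF f true))
    (x' : {g : F // g ≠ f} → Bool) :
    hatS Λ (star Λ f hf σ0 σ1) (extF f true x') = hatS (Λ.reduceF f true) σ1 x' := by
  funext a
  show star Λ f hf σ0 σ1 a (fun f' => extF f true x' f'.1) = σ1 a (fun g => x' g.1)
  have h1 : extF f true x' f = true := by simp [extF]
  simp only [_root_.star, h1, Bool.not_true, Bool.false_and, Bool.true_and, Bool.false_or]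
  congr 1
  funext g
  show extF f true x' g.1.1 = x' g.1
  exact dif_neg g.1.2

lemma phi_red (b : Bool) (x' : {g : F // g ≠ f} → Bool) (y : A → Bool) :
    Λ.φ (extF f b x') y = (Λ.reduceF f b).φ x' y := rfl

lemma prob_star (π : F → ℝ) (σ0 : Strategy (Λ.reduceF f false))
    (σ1 : Strategy (Λ.reduceF f true)) :
    probR Λ π (star Λ f hf σ0 σ1)
      = (1 - π f) * probR (Λ.reduceF f false) (fun g => π g.1) σ0
        + π f * probR (Λ.reduceF f true) (fun g => π g.1) σ1 := by
  unfold probR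
  rw [sum_split f, Finset.mul_sum, Finset.mul_sum]
  congr 1
  · apply Finset.sum_congr rfl
    intro x' _
    rw [wght_split, hatS_star_false, phi_red]
    norm_num [mul_assoc]
  · apply Finset.sum_congr rfl
    intro x' _
    rw [wght_split, hatS_star_true, phi_red]
    norm_num [mul_assoc]

lemma cost_star [Fintype A] (π : F → ℝ) (γ : A → ℝ) (σ0 : Strategy (Λ.reduceF f false))
    (σ1 : Strategy (Λ.reduceF f true)) :
    expCostR Λ π γ (star Λ f hf σ0 σ1)
      = (1 - π f) * expCostR (Λ.reduceF f false) (fun g => π g.1) γ σ0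
        + π f * expCostR (Λ.reduceF f true) (fun g => π g.1) γ σ1 := by
  unfold expCostR
  rw [sum_split f, Finset.mul_sum, Finset.mul_sum]
  congr 1
  · apply Finset.sum_congr rfl
    intro x' _
    rw [wght_split, hatS_star_false]
    norm_num [mul_assoc]
  · apply Finset.sum_congr rfl
    intro x' _
    rw [wght_split, hatS_star_true]
    norm_num [mul_assoc]

lemma star_surj (σ : Strategy Λ) : ∃ σ0 σ1, star Λ f hf σ0 σ1 = σ := by
  refine ⟨fun a x' => σ a (fun f' => if h : f'.1 = f then false
      else x' ⟨⟨f'.1, h⟩, Finset.mem_subtype.mpr f'.2⟩),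
    fun a x' => σ a (fun f' => if h : f'.1 = f then true
      else x' ⟨⟨f'.1, h⟩, Finset.mem_subtype.mpr f'.2⟩), ?_⟩
  funext a x
  cases hx : x ⟨f, hf a⟩ with
  | false =>
    simp only [_root_.star, restr, hx, Bool.not_false, Bool.true_and, Bool.false_and,
      Bool.or_false]
    congr 1
    funext f'
    by_cases h : f'.1 = f
    · rw [dif_pos h]
      rw [show f' = ⟨f, hf a⟩ from Subtype.ext h, hx]
    · rw [dif_neg h]
  | true =>
    simp only [_root_.star, restr, hx, Bool.not_true, Bool.false_and, Bool.true_and,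
      Bool.false_or]
    congr 1
    funext f'
    by_cases h : f'.1 = f
    · rw [dif_pos h]
      rw [show f' = ⟨f, hf a⟩ from Subtype.ext h, hx]
    · rw [dif_neg h]

include hf in
lemma range_eq [Fintype A] (π : F → ℝ) (γ : A → ℝ) :
    Set.range (fun σ : Strategy Λ => (probR Λ π σ, expCostR Λ π γ σ))
      = PsiFeR
        (Set.range (fun σ0 : Strategy (Λ.reduceF f false) =>
          (probR (Λ.reduceF f false) (fun g => π g.1) σ0,
            expCostR (Λ.reduceF f false) (fun g => π g.1) γ σ0)))
        (Set.range (fun σ1 : Strategy (Λ.reduceF f true) =>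
          (probR (Λ.reduceF f true) (fun g => π g.1) σ1,
            expCostR (Λ.reduceF f true) (fun g => π g.1) γ σ1)))
        (π f) := by
  ext d
  constructor
  · rintro ⟨σ, rfl⟩
    obtain ⟨σ0, σ1, hstar⟩ := star_surj f Λ hf σ
    refine ⟨_, ⟨σ0, rfl⟩, _, ⟨σ1, rfl⟩, ?_⟩
    rw [← hstar]
    exact Prod.ext (prob_star f Λ hf π σ0 σ1) (cost_star f Λ hf π γ σ0 σ1)
  · rintro ⟨d1, ⟨σ0, rfl⟩, d2, ⟨σ1, rfl⟩, rfl⟩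
    exact ⟨star Λ f hf σ0 σ1,
      Prod.ext (prob_star f Λ hf π σ0 σ1) (cost_star f Λ hf π γ σ0 σ1)⟩

end Aux

/-- The recursion `PEC(Λ̂) = SCPF(Ψ_F^e(PEC(Λ̂^{f/0}), PEC(Λ̂^{f/1}), π_f))`, where
`PEC(Λ̂) = SCPF(τ_e(Σ_Λ))`. -/
theorem PEC_recursion_f [Fintype F] [Fintype A] [DecidableEq F]
    (Λ : Scenario F A) (π : F → ℝ) (hπ : ∀ g, π g ∈ Set.Icc (0 : ℝ) 1)
    (γ : A → ℝ) (hγ : ∀ a, 0 ≤ γ a)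
    (f : F) (hf : ∀ a, f ∈ Λ.Q a) :
    SCPF (Set.range (fun σ : Strategy Λ => (probR Λ π σ, expCostR Λ π γ σ))) =
      SCPF (PsiFeR
        (SCPF (Set.range (fun σ0 : Strategy (Λ.reduceF f false) =>
          (probR (Λ.reduceF f false) (fun g => π g.1) σ0,
            expCostR (Λ.reduceF f false) (fun g => π g.1) γ σ0))))
        (SCPF (Set.range (fun σ1 : Strategy (Λ.reduceF f true) =>
          (probR (Λ.reduceF f true) (fun g => π g.1) σ1,
            expCostR (Λ.reduceF f true) (fun g => π g.1) γ σ1))))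
        (π f)) := by
  haveI h0f : Finite (Strategy (Λ.reduceF f false)) := by unfold Strategy; infer_instance
  haveI h1f : Finite (Strategy (Λ.reduceF f true)) := by unfold Strategy; infer_instance
  haveI h0n : Nonempty (Strategy (Λ.reduceF f false)) := ⟨fun _ _ => true⟩
  haveI h1n : Nonempty (Strategy (Λ.reduceF f true)) := ⟨fun _ _ => true⟩
  rw [range_eq f Λ hf π γ]
  exact main_set (π f) (hπ f).1 (hπ f).2 _ _ (Set.finite_range _) (Set.finite_range _)
    (Set.range_nonempty _) (Set.range_nonempty _)
end
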